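/- (Proposition 4 of the paper, first part.) Let m, D ≥ 1 and define the normalized matching cost C_m(X,Y) := (1/m)·min over permutations π of Fin m of Σ_{i=1}^m ‖X(i) − Y(π(i))‖² for tuples X, Y : Fin m → ℝ^D. On a probability space Ω, let (A₁, B₁) and (A₂, B₂) be measurable random pairs of tuples valued in (Fin m → ℝ^D) × (Fin m → ℝ^D), such that (A₁, B₁) and (A₂, B₂) are independent and identically distributed, and C_m(A₁, B₁) is integrable. Then E[C_{2m}(A₁∪A₂, B₁∪B₂)] ≤ E[C_m(A₁, B₁)], where A₁∪A₂ denotes the concatenated tuple Fin (2m) → ℝ^D. That is, the expected squared 2-Wasserstein distance between empirical measures of mini-batches of size 2m is at most that for mini-batches of size m. -/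
import Mathlib


open scoped BigOperators
open MeasureTheory

/-- Normalized optimal matching cost between two equal-size tuples of points:
`(1/m) ·` the minimum over permutations `π` of `Σ_i ‖X i − Y (π i)‖²`; it equals the
squared 2-Wasserstein distance between the uniform empirical measures of `X` and `Y`. -/
noncomputable def wassCost {m D : ℕ} (X Y : Fin m → EuclideanSpace ℝ (Fin D)) : ℝ :=
  (m : ℝ)⁻¹ * ⨅ π : Equiv.Perm (Fin m), ∑ i, ‖X i - Y (π i)‖ ^ 2

lemma matchSum_bddBelow {m D : ℕ} (X Y : Fin m → EuclideanSpace ℝ (Fin D)) :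
    BddBelow (Set.range fun π : Equiv.Perm (Fin m) => ∑ i, ‖X i - Y (π i)‖ ^ 2) := by
  refine ⟨0, ?_⟩
  rintro x ⟨π, rfl⟩
  positivity

lemma matchInf_nonneg {m D : ℕ} (X Y : Fin m → EuclideanSpace ℝ (Fin D)) :
    0 ≤ ⨅ π : Equiv.Perm (Fin m), ∑ i, ‖X i - Y (π i)‖ ^ 2 :=
  le_ciInf fun π => by positivity

lemma wassCost_nonneg {m D : ℕ} (X Y : Fin m → EuclideanSpace ℝ (Fin D)) :
    0 ≤ wassCost X Y :=
  mul_nonneg (by positivity) (matchInf_nonneg X Y)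

lemma wassCost_append_le {m D : ℕ} (hm : 1 ≤ m)
    (X₁ X₂ Y₁ Y₂ : Fin m → EuclideanSpace ℝ (Fin D)) :
    wassCost (Fin.append X₁ X₂) (Fin.append Y₁ Y₂) ≤
      (wassCost X₁ Y₁ + wassCost X₂ Y₂) / 2 := by
  have hm0 : (0 : ℝ) < m := by exact_mod_cast hm
  have key : (⨅ σ : Equiv.Perm (Fin (m + m)),
      ∑ i, ‖Fin.append X₁ X₂ i - Fin.append Y₁ Y₂ (σ i)‖ ^ 2) ≤
      (⨅ π : Equiv.Perm (Fin m), ∑ i, ‖X₁ i - Y₁ (π i)‖ ^ 2) +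
      (⨅ π : Equiv.Perm (Fin m), ∑ i, ‖X₂ i - Y₂ (π i)‖ ^ 2) := by
    refine le_ciInf_add_ciInf fun π₁ π₂ => ?_
    set σ : Equiv.Perm (Fin (m + m)) :=
      finSumFinEquiv.symm.trans ((Equiv.sumCongr π₁ π₂).trans finSumFinEquiv) with hσ
    refine (ciInf_le (matchSum_bddBelow _ _) σ).trans_eq ?_
    rw [Fin.sum_univ_add]
    congr 1
    · refine Finset.sum_congr rfl fun i _ => ?_
      simp only [hσ, Equiv.trans_apply, finSumFinEquiv_symm_apply_castAdd,
        Equiv.sumCongr_apply, Sum.map_inl, finSumFinEquiv_apply_left, Fin.append_left]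
    · refine Finset.sum_congr rfl fun i _ => ?_
      simp only [hσ, Equiv.trans_apply, finSumFinEquiv_symm_apply_natAdd,
        Equiv.sumCongr_apply, Sum.map_inr, finSumFinEquiv_apply_right, Fin.append_right]
  have h2 : wassCost (Fin.append X₁ X₂) (Fin.append Y₁ Y₂) ≤
      ((m + m : ℕ) : ℝ)⁻¹ * ((⨅ π : Equiv.Perm (Fin m), ∑ i, ‖X₁ i - Y₁ (π i)‖ ^ 2) +
      (⨅ π : Equiv.Perm (Fin m), ∑ i, ‖X₂ i - Y₂ (π i)‖ ^ 2)) := by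
    exact mul_le_mul_of_nonneg_left key (by positivity)
  refine h2.trans_eq ?_
  unfold wassCost
  push_cast
  rw [show ((m : ℝ) + m) = 2 * m by ring, mul_inv]
  ring

theorem expected_wassCost_double_batch_le (m D : ℕ) (hm : 1 ≤ m) (hD : 1 ≤ D)
    {Ω : Type*} [MeasurableSpace Ω] (ℙ : Measure Ω) [IsProbabilityMeasure ℙ]
    (P₁ P₂ : Ω → (Fin m → EuclideanSpace ℝ (Fin D)) × (Fin m → EuclideanSpace ℝ (Fin D)))
    (hP₁ : Measurable P₁) (hP₂ : Measurable P₂)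
    (hindep : ProbabilityTheory.IndepFun P₁ P₂ ℙ)
    (hid : ProbabilityTheory.IdentDistrib P₁ P₂ ℙ ℙ)
    (hint : Integrable (fun ω => wassCost (P₁ ω).1 (P₁ ω).2) ℙ) :
    ∫ ω, wassCost (Fin.append (P₁ ω).1 (P₂ ω).1) (Fin.append (P₁ ω).2 (P₂ ω).2) ∂ℙ ≤
      ∫ ω, wassCost (P₁ ω).1 (P₁ ω).2 ∂ℙ := by
  set g : (Fin m → EuclideanSpace ℝ (Fin D)) × (Fin m → EuclideanSpace ℝ (Fin D)) → ℝ :=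
    fun p => wassCost p.1 p.2 with hg
  have hgmeas : Measurable g := by
    apply Measurable.const_mul
    apply Measurable.iInf
    intro π
    apply Finset.measurable_sum
    intro i _
    have : Measurable fun p : (Fin m → EuclideanSpace ℝ (Fin D)) ×
        (Fin m → EuclideanSpace ℝ (Fin D)) => p.1 i - p.2 (π i) :=
      ((measurable_pi_apply i).comp measurable_fst).sub
        ((measurable_pi_apply (π i)).comp measurable_snd)
    exact (this.norm.pow_const 2)
  have hid' : ProbabilityTheory.IdentDistrib (g ∘ P₁) (g ∘ P₂) ℙ ℙ := hid.comp hgmeas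
  have hint2 : Integrable (fun ω => wassCost (P₂ ω).1 (P₂ ω).2) ℙ :=
    hid'.integrable_iff.mp hint
  have heq : ∫ ω, wassCost (P₂ ω).1 (P₂ ω).2 ∂ℙ = ∫ ω, wassCost (P₁ ω).1 (P₁ ω).2 ∂ℙ :=
    hid'.integral_eq.symm
  have hle : ∀ ω, wassCost (Fin.append (P₁ ω).1 (P₂ ω).1) (Fin.append (P₁ ω).2 (P₂ ω).2) ≤
      (wassCost (P₁ ω).1 (P₁ ω).2 + wassCost (P₂ ω).1 (P₂ ω).2) / 2 := fun ω =>
    wassCost_append_le hm _ _ _ _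
  calc ∫ ω, wassCost (Fin.append (P₁ ω).1 (P₂ ω).1) (Fin.append (P₁ ω).2 (P₂ ω).2) ∂ℙ
      ≤ ∫ ω, (wassCost (P₁ ω).1 (P₁ ω).2 + wassCost (P₂ ω).1 (P₂ ω).2) / 2 ∂ℙ := by
        refine integral_mono_of_nonneg (Filter.Eventually.of_forall fun ω =>
          wassCost_nonneg _ _) ((hint.add hint2).div_const 2)
          (Filter.Eventually.of_forall hle)
    _ = ∫ ω, wassCost (P₁ ω).1 (P₁ ω).2 ∂ℙ := by
        rw [integral_div, integral_add hint hint2, heq]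
        ring
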